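/- arXiv:0804.4164 — 4 statements merged into one kernel-verified Lean document; each statement's English description precedes it below -/
import Mathlib

section
/- Let R be an integral domain that is a finitely generated ℂ-algebra (the coordinate ring of an irreducible affine complex variety), let M be a finitely generated R-module, and let j ≥ 1. Then there exists a nonzero element f ∈ R such that for every maximal ideal 𝔪 of R with f ∉ 𝔪, the module Tor_j^R(M, R/𝔪) is zero. -/
open CategoryTheory

section GenericTorAux

open Limits MonoidalCategory TensorProduct

variable {R : Type} [CommRing R] (f : R) (M : Type) [AddCommGroup M] [Module R M]

/-- divisibility -/
lemma div_lemma (P : Type) [AddCommGroup P] [Module R P]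
    (w : (LocalizedModule (Submonoid.powers f) M) ⊗[R] P) :
    ∃ (n : ℕ) (z : M ⊗[R] P),
      LinearMap.rTensor P (LocalizedModule.mkLinearMap (Submonoid.powers f) M) z = f ^ n • w := by
  induction w using TensorProduct.induction_on with
  | zero => exact ⟨0, 0, by simp⟩
  | tmul u p =>
    induction u using LocalizedModule.induction_on with
    | h m s =>
      obtain ⟨k, hk⟩ := s.2
      refine ⟨k, m ⊗ₜ p, ?_⟩
      rw [LinearMap.rTensor_tmul, smul_tmul', LocalizedModule.mkLinearMap_apply,
        LocalizedModule.smul'_mk]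
      have : LocalizedModule.mk m (1 : Submonoid.powers f) = LocalizedModule.mk (f ^ k • m) s := by
        rw [LocalizedModule.mk_eq]
        exact ⟨1, by simp [Submonoid.smul_def, hk]⟩
      rw [this]
  | add w₁ w₂ h₁ h₂ =>
    obtain ⟨n₁, z₁, hz₁⟩ := h₁
    obtain ⟨n₂, z₂, hz₂⟩ := h₂
    refine ⟨n₁ + n₂, f ^ n₂ • z₁ + f ^ n₁ • z₂, ?_⟩
    rw [map_add, map_smul, map_smul, hz₁, hz₂, smul_smul, smul_smul, ← pow_add, ← pow_add,
      smul_add, add_comm n₂ n₁]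

/-- kernel -/
lemma ker_lemma (P : Type) [AddCommGroup P] [Module R P] [Module.Flat R P]
    (v : M ⊗[R] P)
    (hv : LinearMap.rTensor P (LocalizedModule.mkLinearMap (Submonoid.powers f) M) v = 0) :
    ∃ n : ℕ, f ^ n • v = 0 := by
  set φ := LocalizedModule.mkLinearMap (Submonoid.powers f) M with hφ
  have hex : Function.Exact (LinearMap.rTensor P (LinearMap.ker φ).subtype)
      (LinearMap.rTensor P φ) :=
    Module.Flat.rTensor_exact P (LinearMap.exact_subtype_ker_map φ)
  obtain ⟨u, hu⟩ := (hex v).mp hv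
  have key : ∀ u : (LinearMap.ker φ) ⊗[R] P,
      ∃ n : ℕ, f ^ n • (LinearMap.rTensor P (LinearMap.ker φ).subtype u) = 0 := by
    intro u
    induction u using TensorProduct.induction_on with
    | zero => exact ⟨0, by simp⟩
    | tmul k p =>
      obtain ⟨s, hs⟩ := (IsLocalizedModule.eq_zero_iff (Submonoid.powers f) φ).mp k.2
      obtain ⟨n, hn⟩ := s.2
      refine ⟨n, ?_⟩
      rw [LinearMap.rTensor_tmul, smul_tmul', Submodule.coe_subtype]
      rw [Submonoid.smul_def, ← hn] at hs
      have : f ^ n • (k : M) = 0 := hs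
      rw [this, zero_tmul]
    | add u₁ u₂ h₁ h₂ =>
      obtain ⟨n₁, hn₁⟩ := h₁
      obtain ⟨n₂, hn₂⟩ := h₂
      refine ⟨n₁ + n₂, ?_⟩
      rw [map_add, smul_add]
      have e1 : f ^ (n₁ + n₂) • (LinearMap.rTensor P (LinearMap.ker φ).subtype u₁) = 0 := by
        rw [pow_add, mul_comm, mul_smul, hn₁, smul_zero]
      have e2 : f ^ (n₁ + n₂) • (LinearMap.rTensor P (LinearMap.ker φ).subtype u₂) = 0 := by
        rw [pow_add, mul_smul, hn₂, smul_zero]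
      rw [e1, e2, add_zero]
  obtain ⟨n, hn⟩ := key u
  exact ⟨n, by rw [← hu, hn]⟩

lemma chase [Module.Flat R (LocalizedModule (Submonoid.powers f) M)]
    (S : ShortComplex (ModuleCat.{0} R)) [Projective S.X₂]
    (hE : ∀ w : (LocalizedModule (Submonoid.powers f) M) ⊗[R] ↑S.X₂,
      LinearMap.lTensor (LocalizedModule (Submonoid.powers f) M) S.g.hom w = 0 →
      ∃ u, LinearMap.lTensor (LocalizedModule (Submonoid.powers f) M) S.f.hom u = w)
    (x : M ⊗[R] ↑S.X₂)
    (hx : LinearMap.lTensor M S.g.hom x = 0) :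
    ∃ (n : ℕ) (y : M ⊗[R] ↑S.X₁),
      LinearMap.lTensor M S.f.hom y = f ^ n • x := by
  classical
  have hp : Projective (ModuleCat.of R ↑S.X₂) := inferInstanceAs (Projective S.X₂)
  have flatX₂ : Module.Flat R S.X₂ := by
    have : Module.Projective R S.X₂ := (IsProjective.iff_projective _).mpr hp
    exact Module.Flat.of_projective
  set Mf := LocalizedModule (Submonoid.powers f) M with hMf
  set φ := LocalizedModule.mkLinearMap (Submonoid.powers f) M with hφ
  have hcomm₂ : LinearMap.lTensor Mf S.g.hom ∘ₗ LinearMap.rTensor S.X₂ φ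
      = LinearMap.rTensor S.X₃ φ ∘ₗ LinearMap.lTensor M S.g.hom := by
    rw [LinearMap.lTensor_comp_rTensor, LinearMap.rTensor_comp_lTensor]
  have hcyc : LinearMap.lTensor Mf S.g.hom (LinearMap.rTensor S.X₂ φ x) = 0 := by
    rw [← LinearMap.comp_apply, hcomm₂, LinearMap.comp_apply, hx, map_zero]
  obtain ⟨w, hw⟩ := hE _ hcyc
  obtain ⟨n, z, hz⟩ := div_lemma f M (S.X₁ : Type) w
  have hcomm₁ : LinearMap.lTensor Mf S.f.hom ∘ₗ LinearMap.rTensor S.X₁ φ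
      = LinearMap.rTensor S.X₂ φ ∘ₗ LinearMap.lTensor M S.f.hom := by
    rw [LinearMap.lTensor_comp_rTensor, LinearMap.rTensor_comp_lTensor]
  have hker : LinearMap.rTensor S.X₂ φ (f ^ n • x - LinearMap.lTensor M S.f.hom z) = 0 := by
    have h1 : LinearMap.rTensor S.X₂ φ (LinearMap.lTensor M S.f.hom z)
        = LinearMap.lTensor Mf S.f.hom (LinearMap.rTensor S.X₁ φ z) := by
      rw [← LinearMap.comp_apply, ← hcomm₁, LinearMap.comp_apply]
    rw [map_sub, map_smul, h1, hz, map_smul, hw, sub_self]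
  obtain ⟨m, hm⟩ := ker_lemma f M (S.X₂ : Type) _ hker
  refine ⟨m + n, f ^ m • z, ?_⟩
  rw [map_smul]
  rw [smul_sub, sub_eq_zero] at hm
  rw [← hm, pow_add, mul_smul]

open HomologicalComplex in
lemma tor_isZero_aux {R : Type} [CommRing R] (f : R) (M : Type) [AddCommGroup M] [Module R M]
    [Module.Flat R (LocalizedModule (Submonoid.powers f) M)]
    (Y : ModuleCat.{0} R) (hY : IsIso ((f : R) • 𝟙 Y)) (n : ℕ) :
    IsZero ((((tensoringLeft (ModuleCat.{0} R)).obj (ModuleCat.of R M)).leftDerived (n + 1)).obj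
      Y) := by
  set F := (tensoringLeft (ModuleCat.{0} R)).obj (ModuleCat.of R M) with hF
  have P : ProjectiveResolution Y := HasProjectiveResolution.out.some
  set C := (F.mapHomologicalComplex (ComplexShape.down ℕ)).obj P.complex with hC
  set e : (F.leftDerived (n+1)).obj Y ≅ (HomologicalComplex.homologyFunctor _ _ (n+1)).obj C :=
    P.isoLeftDerivedObj F (n+1) with he
  -- the chain map `f • 𝟙` lifts `f • 𝟙 Y`
  set φc : P.complex ⟶ P.complex := f • 𝟙 P.complex with hφc
  have comm : φc.f 0 ≫ P.π.f 0 = P.π.f 0 ≫ (f • 𝟙 Y) := by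
    rw [hφc, HomologicalComplex.smul_f_apply, Linear.smul_comp]
    rw [HomologicalComplex.id_f, Category.id_comp]
    exact ((Linear.comp_smul _ _ _ (P.π.f 0) f (𝟙 Y)).trans (congrArg (f • ·) (Category.comp_id _))).symm
  have nat := ProjectiveResolution.isoLeftDerivedObj_hom_naturality ((f : R) • 𝟙 Y) P P φc comm
    F (n+1)
  have hmapφ : (F.mapHomologicalComplex (ComplexShape.down ℕ)).map φc = f • 𝟙 C := by
    rw [hφc, Functor.map_smul, CategoryTheory.Functor.map_id]
  have hhom : (F.mapHomologicalComplex _ ⋙ HomologicalComplex.homologyFunctor _ _ (n+1)).map φc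
      = f • 𝟙 ((HomologicalComplex.homologyFunctor (ModuleCat R) _ (n+1)).obj C) := by
    show HomologicalComplex.homologyMap ((F.mapHomologicalComplex _).map φc) (n+1) = _
    rw [hmapφ]
    show ShortComplex.homologyMap ((shortComplexFunctor _ _ (n+1)).map ((f : R) • 𝟙 C)) = _
    have : (shortComplexFunctor (ModuleCat.{0} R) (ComplexShape.down ℕ) (n+1)).map
        ((f : R) • 𝟙 C) = f • 𝟙 (C.sc (n+1)) := by
      apply ShortComplex.hom_ext <;> simp <;> rfl
    rw [this, ShortComplex.homologyMap_smul]
    congr 1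
    show ShortComplex.homologyMap (𝟙 (C.sc (n+1))) = _
    rw [ShortComplex.homologyMap_id]
    rfl
  -- hence `f • 𝟙` is an isomorphism on the homology
  rw [hhom] at nat
  have hiso : IsIso ((f : R) • 𝟙 ((HomologicalComplex.homologyFunctor (ModuleCat R) _
      (n+1)).obj C)) := by
    have : (f : R) • 𝟙 ((HomologicalComplex.homologyFunctor (ModuleCat R) _ (n+1)).obj C)
        = e.inv ≫ (F.leftDerived (n+1)).map ((f : R) • 𝟙 Y) ≫ e.hom := by
      rw [nat, Iso.inv_hom_id_assoc]
    rw [this]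
    infer_instance
  -- injectivity of the `f`-action on the homology
  set H := (HomologicalComplex.homologyFunctor (ModuleCat R) (ComplexShape.down ℕ) (n+1)).obj C
    with hH
  have hinj : Function.Injective (fun h : H => (f : R) • h) := by
    have hm : Function.Injective ((f : R) • 𝟙 H) :=
      (ModuleCat.mono_iff_injective ((f : R) • 𝟙 H)).mp inferInstance
    intro a b hab
    apply hm
    exact hab
  -- the `f`-power torsion of the homology
  have htor : ∀ h : H, ∃ k : ℕ, f ^ k • h = 0 := by
    intro h
    set S₀ := P.complex.sc (n+1) with hS₀
    set S₁ := C.sc (n+1) with hS₁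
    haveI : Projective S₀.X₂ := inferInstanceAs (Projective (P.complex.X (n+1)))
    -- exactness of the `Mf`-tensored complex
    have hPE : S₀.Exact := P.complex_exactAt_succ n
    haveI : Module.Flat R (ModuleCat.of R (LocalizedModule (Submonoid.powers f) M)) :=
      ‹Module.Flat R (LocalizedModule (Submonoid.powers f) M)›
    have hTE := Module.Flat.lTensor_shortComplex_exact
      (ModuleCat.of R (LocalizedModule (Submonoid.powers f) M)) S₀ hPE
    rw [ShortComplex.moduleCat_exact_iff] at hTE
    -- the element of the concrete homology
    obtain ⟨c, hc⟩ := Submodule.Quotient.mk_surjective _ (S₁.moduleCatHomologyIso.hom h)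
    obtain ⟨k, y, hy⟩ := chase f M S₀ (fun w hw => hTE w hw) c.1 c.2
    refine ⟨k, ?_⟩
    have hiso2 : Function.Injective S₁.moduleCatHomologyIso.hom :=
      (ModuleCat.mono_iff_injective _).mp inferInstance
    apply hiso2
    erw [map_smul]
    erw [map_zero]
    rw [← hc]
    erw [← Submodule.Quotient.mk_smul]
    erw [Submodule.Quotient.mk_eq_zero]
    exact ⟨y, Subtype.ext hy⟩
  -- conclude
  have hzero : ∀ h : H, h = 0 := by
    intro h
    obtain ⟨k, hk⟩ := htor h
    induction k generalizing h with
    | zero => simpa using hk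
    | succ k ih =>
      have h1 : f • h = 0 := ih (f • h) (by rw [← mul_smul, ← pow_succ]; exact hk)
      apply hinj
      show f • h = f • 0
      rw [smul_zero]
      exact h1
  have : Subsingleton (↑H) := subsingleton_of_forall_eq 0 hzero
  exact IsZero.of_iso (ModuleCat.isZero_of_subsingleton H) e

lemma smul_quot_zero {R : Type} [CommRing R] (I : Ideal R) {c : R} (hc : c ∈ I) (x : R ⧸ I) :
    c • x = 0 := by
  obtain ⟨a, rfl⟩ := Submodule.Quotient.mk_surjective I x
  rw [← Submodule.Quotient.mk_smul, Submodule.Quotient.mk_eq_zero]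
  simpa [smul_eq_mul] using I.mul_mem_right a hc

lemma isiso_smul_quot {R : Type} [CommRing R] (𝔪 : Ideal R) (hm : 𝔪.IsMaximal) {f : R}
    (hf : f ∉ 𝔪) : IsIso ((f : R) • 𝟙 (ModuleCat.of R (R ⧸ 𝔪))) := by
  obtain ⟨s, i, hi, hsum⟩ := hm.exists_inv hf
  have key : ∀ x : R ⧸ 𝔪, (s * f) • x = x := by
    intro x
    have h1 : (s * f + i) • x = x := by rw [hsum, one_smul]
    rwa [add_smul, smul_quot_zero 𝔪 hi x, add_zero] at h1
  refine ⟨(s : R) • 𝟙 _, ?_, ?_⟩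
  · refine ModuleCat.hom_ext (LinearMap.ext fun x => ?_)
    show s • f • x = x
    rw [smul_smul, mul_comm s f, mul_comm f s, key]
  · refine ModuleCat.hom_ext (LinearMap.ext fun x => ?_)
    show f • s • x = x
    rw [smul_smul, mul_comm f s, key]

end GenericTorAux

/-- **Generic vanishing of Tor for finitely generated modules.**
Let `R` be an integral domain that is a finitely generated `ℂ`-algebra, let `M` be a
finitely generated `R`-module, and let `j ≥ 1`.  Then there is a nonzero `f ∈ R` such that
for every maximal ideal `𝔪` of `R` with `f ∉ 𝔪`, the module `Tor_j^R(M, R/𝔪)` vanishes. -/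
theorem generic_tor_vanishing_of_finite
    (R : Type) [CommRing R] [IsDomain R] [Algebra ℂ R] [Algebra.FiniteType ℂ R]
    (M : Type) [AddCommGroup M] [Module R M] [Module.Finite R M]
    (j : ℕ) (hj : 1 ≤ j) :
    ∃ f : R, f ≠ 0 ∧ ∀ 𝔪 : Ideal R, 𝔪.IsMaximal → f ∉ 𝔪 →
      Limits.IsZero (((Tor (ModuleCat R) j).obj (ModuleCat.of R M)).obj
        (ModuleCat.of R (R ⧸ 𝔪))) := by
  haveI : IsNoetherianRing R := Algebra.FiniteType.isNoetherianRing ℂ R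
  haveI : Module.FinitePresentation R M := Module.finitePresentation_of_finite R M
  obtain ⟨r, hr, hfree, -⟩ := Module.FinitePresentation.exists_free_localizedModule_powers
    (nonZeroDivisors R) (LocalizedModule.mkLinearMap (nonZeroDivisors R) M) (FractionRing R)
  haveI := hfree
  haveI : Module.Flat R (LocalizedModule (Submonoid.powers r) M) :=
    Module.Flat.trans (R := R) (S := Localization (Submonoid.powers r))
      (M := LocalizedModule (Submonoid.powers r) M)
  refine ⟨r, mem_nonZeroDivisors_iff_ne_zero.mp hr, ?_⟩
  intro 𝔪 hmax hrm
  haveI := isiso_smul_quot 𝔪 hmax hrm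
  obtain ⟨n, rfl⟩ : ∃ n, j = n + 1 := ⟨j - 1, by omega⟩
  exact tor_isZero_aux r M (ModuleCat.of R (R ⧸ 𝔪)) inferInstance n
end

section
/- Let R be an integral domain that is a finitely generated ℂ-algebra, let M be a countably generated R-module, and let j ≥ 1. Then there exists a countable family (f_i)_{i∈ℕ} of nonzero elements of R such that for every maximal ideal 𝔪 of R satisfying f_i ∉ 𝔪 for all i, the module Tor_j^R(M, R/𝔪) is zero. -/
open CategoryTheory


open scoped nonZeroDivisors
open LinearMap

lemma exists_generic_split (R : Type) [CommRing R] [IsDomain R] [IsNoetherianRing R]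
    (N : Type) [AddCommGroup N] [Module R N] [Module.Finite R N] :
    ∃ g : R, g ≠ 0 ∧ ∃ (r : ℕ) (φ : N →ₗ[R] (Fin r → R)) (ψ : (Fin r → R) →ₗ[R] N),
      ψ ∘ₗ φ = g • (LinearMap.id : N →ₗ[R] N) := by
  classical
  let K := FractionRing R
  let L := LocalizedModule R⁰ N
  let ι : N →ₗ[R] L := LocalizedModule.mkLinearMap R⁰ N
  haveI : Module.Finite K L := Module.Finite.of_isLocalizedModule R⁰ ι
  set r := Module.finrank K L with hr
  let b : Module.Basis (Fin r) K L := Module.finBasis K L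
  obtain ⟨T, hT⟩ : (⊤ : Submodule R N).FG := Module.Finite.fg_top
  obtain ⟨d, hd⟩ := IsLocalization.exist_integer_multiples_of_finite (R⁰) (S := K)
      (fun p : T × Fin r => b.equivFun (ι p.1) p.2)
  let A : (Fin r → R) →ₗ[R] (Fin r → K) :=
    LinearMap.pi (fun i => (Algebra.linearMap R K) ∘ₗ LinearMap.proj i)
  have hA : ∀ (v : Fin r → R) (i : Fin r), A v i = algebraMap R K (v i) := fun v i => rfl
  have hAinj : Function.Injective A := by
    intro v w h
    funext i
    exact IsFractionRing.injective R K (by rw [← hA v i, ← hA w i, h])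
  let φ₁ : N →ₗ[R] (Fin r → K) :=
    (d : R) • (((b.equivFun.restrictScalars R).toLinearMap) ∘ₗ ι)
  have hφ₁ : ∀ (x : N) (i : Fin r), φ₁ x i = (d : R) • (b.equivFun (ι x) i) := fun x i => rfl
  have hmem : ∀ x : N, φ₁ x ∈ LinearMap.range A := by
    have hle : (⊤ : Submodule R N) ≤ Submodule.comap φ₁ (LinearMap.range A) := by
      rw [← hT, Submodule.span_le]
      intro y hy
      simp only [SetLike.mem_coe, Submodule.mem_comap, LinearMap.mem_range]
      refine ⟨fun i => (hd (⟨⟨y, hy⟩, i⟩)).choose, ?_⟩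
      funext i
      rw [hA, (hd (⟨⟨y, hy⟩, i⟩)).choose_spec, hφ₁]
    exact fun x => hle (Submodule.mem_top) 
  let e := LinearEquiv.ofInjective A hAinj
  let φ : N →ₗ[R] (Fin r → R) :=
    e.symm.toLinearMap ∘ₗ (φ₁.codRestrict (LinearMap.range A) hmem)
  have hφ : ∀ x, A (φ x) = φ₁ x := by
    intro x
    calc A (φ x) = ↑(e (e.symm ⟨φ₁ x, hmem x⟩)) :=
          (LinearEquiv.ofInjective_apply A (e.symm ⟨φ₁ x, hmem x⟩)).symm
    _ = φ₁ x := by rw [e.apply_symm_apply]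
  have hsurj := fun i : Fin r => IsLocalizedModule.surj R⁰ ι (b i)
  choose p hp using hsurj
  let c : R⁰ := ∏ i, (p i).2
  let x' : Fin r → N := fun i => (∏ j ∈ Finset.univ.erase i, ((p j).2 : R)) • (p i).1
  have hx' : ∀ i, ι (x' i) = (c : R) • b i := by
    intro i
    rw [map_smul, ← hp i, Submonoid.smul_def, smul_smul, Finset.prod_erase_mul _ _ (Finset.mem_univ i)]
    congr 1
    exact (Submonoid.coe_finset_prod _ _ _).symm
  let ψ₀ : (Fin r → R) →ₗ[R] N := ∑ i, (LinearMap.proj i).smulRight (x' i)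
  have hψ₀ : ∀ v : Fin r → R, ι (ψ₀ v) = (c : R) • ∑ i, v i • b i := by
    intro v
    have : ψ₀ v = ∑ i, v i • x' i := by
      simp [ψ₀, LinearMap.sum_apply, LinearMap.smulRight_apply, LinearMap.proj_apply]
    rw [this, map_sum, Finset.smul_sum]
    refine Finset.sum_congr rfl fun i _ => ?_
    rw [map_smul, hx', smul_comm]
  have key : ∀ x : N, ι (ψ₀ (φ x)) = ((c : R) * (d : R)) • ι x := by
    intro x
    rw [hψ₀]
    have h2 : ∑ i, (φ x) i • b i = (d : R) • ι x := by
      have h3 : ∀ i : Fin r, (φ x) i • b i = (d : R) • ((b.equivFun (ι x) i) • b i) := by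
        intro i
        rw [← algebraMap_smul K ((φ x) i) (b i), ← hA, hφ, hφ₁, smul_assoc]
      rw [Finset.sum_congr rfl (fun i _ => h3 i), ← Finset.smul_sum, b.sum_equivFun]
    rw [h2, smul_smul]
  haveI : IsNoetherian R N := isNoetherian_of_isNoetherianRing_of_finite R N
  obtain ⟨G, hG⟩ : (LinearMap.ker ι).FG := IsNoetherian.noetherian _
  have hκ : ∀ y : N, ι y = 0 → ∃ k : R⁰, (k : R) • y = 0 := by
    intro y hy
    obtain ⟨k, hk⟩ := IsLocalizedModule.exists_of_eq (S := R⁰) (f := ι) (x₁ := y) (x₂ := 0)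
      (by rw [hy, map_zero])
    exact ⟨k, by simpa [Submonoid.smul_def] using hk⟩
  let κ : N → R⁰ := fun y => if hy : ι y = 0 then (hκ y hy).choose else 1
  have hκ' : ∀ y : N, ι y = 0 → (κ y : R) • y = 0 := by
    intro y hy
    simp only [κ, dif_pos hy]
    exact (hκ y hy).choose_spec
  let h : R⁰ := ∏ y ∈ G, κ y
  have hker : ∀ x ∈ LinearMap.ker ι, (h : R) • x = 0 := by
    have hle : LinearMap.ker ι ≤ LinearMap.ker ((h : R) • (LinearMap.id : N →ₗ[R] N)) := by
      rw [← hG, Submodule.span_le]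
      intro y hy
      simp only [SetLike.mem_coe, LinearMap.mem_ker, LinearMap.smul_apply, LinearMap.id_apply]
      have h1 : (h : R) = (∏ z ∈ G.erase y, (κ z : R)) * (κ y : R) := by
        have h0 : (h : R) = ∏ z ∈ G, (κ z : R) := Submonoid.coe_finset_prod _ _ _
        rw [h0, ← Finset.prod_erase_mul _ _ (Finset.mem_coe.mp hy)]
      have hy0 : ι y = 0 := by
        have : y ∈ LinearMap.ker ι := hG ▸ Submodule.subset_span hy
        simpa using this
      rw [h1, mul_smul, hκ' y hy0, smul_zero]
    intro x hx
    simpa using hle hx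
  refine ⟨(h : R) * ((c : R) * (d : R)), ?_, r, φ, (h : R) • ψ₀, ?_⟩
  · have h1 : (h : R) ≠ 0 := nonZeroDivisors.coe_ne_zero h
    have h2 : (c : R) ≠ 0 := nonZeroDivisors.coe_ne_zero c
    have h3 : (d : R) ≠ 0 := nonZeroDivisors.coe_ne_zero d
    exact mul_ne_zero h1 (mul_ne_zero h2 h3)
  · ext x
    simp only [LinearMap.comp_apply, LinearMap.smul_apply, LinearMap.id_apply]
    have hτ : ι (ψ₀ (φ x) - ((c : R) * (d : R)) • x) = 0 := by
      rw [map_sub, key, map_smul, sub_self]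
    have := hker _ (LinearMap.mem_ker.2 hτ)
    rw [smul_sub] at this
    have h5 : (h : R) • ψ₀ (φ x) = (h : R) • ((c : R) * (d : R)) • x := by
      rwa [sub_eq_zero] at this
    rw [h5, smul_smul]



open LinearMap

section chase
variable {R : Type} [CommRing R] {M : Type} [AddCommGroup M] [Module R M]

lemma mem_of_smul_mem {V : Type} [AddCommGroup V] [Module R V]
    (Q : Submodule R V) (z : V) (𝔪 : Ideal R) (hmax : 𝔪.IsMaximal) (g : R) (hg : g ∉ 𝔪)
    (h1 : ∀ m ∈ 𝔪, m • z ∈ Q) (h2 : g • z ∈ Q) : z ∈ Q := by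
  obtain ⟨y, i, hi, hyi⟩ := hmax.exists_inv hg
  have : z = y • (g • z) + i • z := by
    rw [smul_smul, ← add_smul, hyi, one_smul]
  rw [this]
  exact Q.add_mem (Q.smul_mem y h2) (h1 i hi)

lemma exists_range_rTensor (Msub : ℕ → Submodule R M) (hmono : Monotone Msub)
    (hsup : ∀ x : M, ∃ n, x ∈ Msub n) (Q : Type) [AddCommGroup Q] [Module R Q]
    (z : TensorProduct R M Q) :
    ∃ n, z ∈ LinearMap.range (LinearMap.rTensor Q (Msub n).subtype) := by
  have hrange : ∀ a b : ℕ, a ≤ b → LinearMap.range (LinearMap.rTensor Q (Msub a).subtype) ≤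
      LinearMap.range (LinearMap.rTensor Q (Msub b).subtype) := by
    intro a b hab w hw
    obtain ⟨u, hu⟩ := hw
    refine ⟨LinearMap.rTensor Q (Submodule.inclusion (hmono hab)) u, ?_⟩
    rw [← LinearMap.comp_apply, ← LinearMap.rTensor_comp,
      Submodule.subtype_comp_inclusion, hu]
  induction z using TensorProduct.induction_on with
  | zero => exact ⟨0, Submodule.zero_mem _⟩
  | tmul m q =>
      obtain ⟨n, hn⟩ := hsup m
      exact ⟨n, ⟨(⟨m, hn⟩ : Msub n) ⊗ₜ[R] q, rfl⟩⟩
  | add x y hx hy =>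
      obtain ⟨n1, h1⟩ := hx
      obtain ⟨n2, h2⟩ := hy
      exact ⟨max n1 n2, Submodule.add_mem _ (hrange _ _ (le_max_left _ _) h1)
        (hrange _ _ (le_max_right _ _) h2)⟩

lemma exact_lTensor_of_generic
    [IsDomain R]
    {P2 P1 P0 : Type}
    [AddCommGroup P2] [Module R P2] [AddCommGroup P1] [Module R P1] [AddCommGroup P0] [Module R P0]
    [Module.Flat R P1] [Module.Flat R P0]
    (d2 : P2 →ₗ[R] P1) (d1 : P1 →ₗ[R] P0)
    (Msub : ℕ → Submodule R M) (hmono : Monotone Msub) (hsup : ∀ x : M, ∃ n, x ∈ Msub n)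
    (𝔪 : Ideal R) (hmax : 𝔪.IsMaximal)
    (g : ℕ → R) (hg : ∀ n, g n ∉ 𝔪)
    (split : ∀ n, ∃ (r : ℕ) (φ : Msub n →ₗ[R] (Fin r → R)) (ψ : (Fin r → R) →ₗ[R] Msub n),
        ψ ∘ₗ φ = g n • LinearMap.id)
    (hmid : Function.Exact d2 d1)
    (homot : ∀ m ∈ 𝔪, ∃ (h1 : P1 →ₗ[R] P2) (h0 : P0 →ₗ[R] P1),
        d2 ∘ₗ h1 + h0 ∘ₗ d1 = m • LinearMap.id) :
    Function.Exact (LinearMap.lTensor M d2) (LinearMap.lTensor M d1) := by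
  intro z
  constructor
  · -- cycle → boundary
    intro hz
    have main : z ∈ LinearMap.range (LinearMap.lTensor M d2) := by
      obtain ⟨n, z', hz'⟩ := exists_range_rTensor Msub hmono hsup P1 z
      have hinj : Function.Injective (LinearMap.rTensor P0 (Msub n).subtype) :=
        Module.Flat.rTensor_preserves_injective_linearMap (Msub n).subtype
          (Msub n).injective_subtype
      have hdz' : LinearMap.lTensor (Msub n) d1 z' = 0 := by
        apply hinj
        rw [map_zero, ← LinearMap.comp_apply, LinearMap.rTensor_comp_lTensor,
          ← LinearMap.lTensor_comp_rTensor, LinearMap.comp_apply, hz', hz]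
      obtain ⟨r, φ, ψ, hsplit⟩ := split n
      have hdw : LinearMap.lTensor (Fin r → R) d1 (LinearMap.rTensor P1 φ z') = 0 := by
        rw [← LinearMap.comp_apply, LinearMap.lTensor_comp_rTensor,
          ← LinearMap.rTensor_comp_lTensor, LinearMap.comp_apply, hdz', map_zero]
      have hexact2 : Function.Exact (LinearMap.lTensor (Fin r → R) d2)
          (LinearMap.lTensor (Fin r → R) d1) := Module.Flat.lTensor_exact (Fin r → R) hmid
      obtain ⟨u, hu⟩ := (hexact2 _).mp hdw
      -- g n • z is a boundary
      have hgz : g n • z ∈ LinearMap.range (LinearMap.lTensor M d2) := by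
        refine ⟨LinearMap.rTensor P2 ((Msub n).subtype ∘ₗ ψ) u, ?_⟩
        rw [← LinearMap.comp_apply, LinearMap.lTensor_comp_rTensor,
          ← LinearMap.rTensor_comp_lTensor, LinearMap.comp_apply, hu,
          ← LinearMap.comp_apply, ← LinearMap.rTensor_comp, LinearMap.comp_assoc, hsplit]
        have hc : (Msub n).subtype ∘ₗ (g n • (LinearMap.id : Msub n →ₗ[R] Msub n)) =
            g n • (Msub n).subtype := by
          ext x; simp
        rw [hc, LinearMap.rTensor_smul, LinearMap.smul_apply, hz']
      -- m • z is a boundary for m ∈ 𝔪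
      have hmz : ∀ m ∈ 𝔪, m • z ∈ LinearMap.range (LinearMap.lTensor M d2) := by
        intro m hm
        obtain ⟨h1, h0, heq⟩ := homot m hm
        have := congrArg (fun f => LinearMap.lTensor M f) heq
        simp only [LinearMap.lTensor_add, LinearMap.lTensor_comp, LinearMap.lTensor_smul,
          LinearMap.lTensor_id] at this
        have h2 := congrArg (fun f => f z) this
        simp only [LinearMap.add_apply, LinearMap.comp_apply, LinearMap.smul_apply,
          LinearMap.id_apply] at h2
        rw [hz, map_zero, add_zero] at h2
        exact ⟨LinearMap.lTensor M h1 z, h2⟩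
      exact mem_of_smul_mem _ z 𝔪 hmax (g n) (hg n) hmz hgz
    exact main
  · rintro ⟨u, rfl⟩
    rw [← LinearMap.comp_apply, ← LinearMap.lTensor_comp]
    have : d1 ∘ₗ d2 = 0 := by
      ext x; exact hmid.apply_apply_eq_zero x
    rw [this, LinearMap.lTensor_zero, LinearMap.zero_apply]

/-- **Generic vanishing of Tor for countably generated modules.**
Let `R` be an integral domain that is a finitely generated `ℂ`-algebra, let `M` be a
countably generated `R`-module, and let `j ≥ 1`.  Then there is a countable family
`(f i)` of nonzero elements of `R` such that for every maximal ideal `𝔪` of `R` avoiding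
all the `f i`, the module `Tor_j^R(M, R/𝔪)` vanishes. -/
theorem generic_tor_vanishing_of_countably_generated
    (R : Type) [CommRing R] [IsDomain R] [Algebra ℂ R] [Algebra.FiniteType ℂ R]
    (M : Type) [AddCommGroup M] [Module R M]
    (hM : ∃ S : Set M, S.Countable ∧ Submodule.span R S = ⊤)
    (j : ℕ) (hj : 1 ≤ j) :
    ∃ f : ℕ → R, (∀ i, f i ≠ 0) ∧ ∀ 𝔪 : Ideal R, 𝔪.IsMaximal → (∀ i, f i ∉ 𝔪) →
      Limits.IsZero (((Tor (ModuleCat R) j).obj (ModuleCat.of R M)).obj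
        (ModuleCat.of R (R ⧸ 𝔪))) := by
  haveI : IsNoetherianRing R := Algebra.FiniteType.isNoetherianRing ℂ R
  obtain ⟨S, hSc, hSs⟩ := hM
  obtain ⟨s, hs⟩ : ∃ s : ℕ → M, Submodule.span R (Set.range s) = ⊤ := by
    rcases Set.eq_empty_or_nonempty S with he | hne
    · refine ⟨fun _ => 0, ?_⟩
      have htop : (⊤ : Submodule R M) = ⊥ := by
        rw [← hSs, he, Submodule.span_empty]
      rw [eq_top_iff, htop]
      exact bot_le
    · obtain ⟨s, hrange⟩ := Set.Countable.exists_eq_range hSc hne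
      exact ⟨s, by rw [← hrange, hSs]⟩
  set Msub : ℕ → Submodule R M := fun n => Submodule.span R (s '' Set.Iio n) with hMsub
  have hmono : Monotone Msub := fun a b hab =>
    Submodule.span_mono (Set.image_mono (Set.Iio_subset_Iio hab))
  have hsup : ∀ x : M, ∃ n, x ∈ Msub n := by
    intro x
    have hx : x ∈ Submodule.span R (Set.range s) := hs.symm ▸ Submodule.mem_top
    have hU : Set.range s = ⋃ n : ℕ, s '' Set.Iio n := by
      ext y
      simp only [Set.mem_range, Set.mem_iUnion, Set.mem_image, Set.mem_Iio]
      constructor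
      · rintro ⟨i, rfl⟩; exact ⟨i + 1, i, Nat.lt_succ_self i, rfl⟩
      · rintro ⟨n, i, _, rfl⟩; exact ⟨i, rfl⟩
    rw [hU, Submodule.span_iUnion] at hx
    exact (Submodule.mem_iSup_of_directed _ hmono.directed_le).mp hx
  haveI hfin : ∀ n, Module.Finite R (Msub n) := by
    intro n
    rw [Module.Finite.iff_fg]
    exact Submodule.fg_span ((Set.finite_Iio n).image s)
  have hsp := fun n => exists_generic_split R (Msub n)
  choose g hg0 hsp using hsp
  refine ⟨g, hg0, ?_⟩
  intro 𝔪 hmax hgm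
  obtain ⟨k, rfl⟩ : ∃ k, j = k + 1 := ⟨j - 1, (Nat.succ_pred_eq_of_pos hj).symm⟩
  let Y : ModuleCat R := ModuleCat.of R (R ⧸ 𝔪)
  let F : ModuleCat R ⥤ ModuleCat R :=
    (MonoidalCategory.tensoringLeft (ModuleCat R)).obj (ModuleCat.of R M)
  let P : ProjectiveResolution Y := (HasProjectiveResolution.out (Z := Y)).some
  haveI hflat : ∀ i : ℕ, Module.Flat R (P.complex.X i) := by
    intro i
    haveI : Projective (P.complex.X i) := P.projective i
    haveI : Module.Projective R (P.complex.X i) :=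
      (IsProjective.iff_projective (P.complex.X i)).mpr (P.projective i)
    exact Module.Flat.of_projective
  -- the exactness of the resolution at k+1
  have hmid : Function.Exact
      (P.complex.d (k + 2) (k + 1)).hom
      (P.complex.d (k + 1) k).hom := by
    have hx := P.complex_exactAt_succ k
    rw [HomologicalComplex.exactAt_iff' _ (k + 2) (k + 1) k
      (ChainComplex.prev ℕ (k + 1)) (by simp)] at hx
    exact (ShortComplex.ShortExact.moduleCat_exact_iff_function_exact _).mp hx
  -- the homotopies killing 𝔪
  have homot : ∀ m ∈ 𝔪, ∃ (h1 : P.complex.X (k + 1) →ₗ[R] P.complex.X (k + 2))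
      (h0 : P.complex.X k →ₗ[R] P.complex.X (k + 1)),
      (P.complex.d (k + 2) (k + 1)).hom ∘ₗ h1 +
        h0 ∘ₗ (P.complex.d (k + 1) k).hom =
        m • LinearMap.id := by
    intro m hm
    have hzero : ∀ (A : ModuleCat R) (f : A ⟶ Y), m • f = 0 := by
      intro A f
      apply ModuleCat.hom_ext
      apply LinearMap.ext
      intro x
      show m • (f x) = 0
      obtain ⟨y, hy⟩ := Submodule.Quotient.mk_surjective 𝔪 (f x)
      rw [← hy, ← Submodule.Quotient.mk_smul, Submodule.Quotient.mk_eq_zero, smul_eq_mul]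
      exact Ideal.mul_mem_right y 𝔪 hm
    let sm : P.complex ⟶ P.complex :=
      { f := fun i => m • 𝟙 _
        comm' := by intro i j hij; simp }
    have hcomm : sm ≫ P.π = 0 := by
      apply HomologicalComplex.hom_ext
      intro n
      simp only [HomologicalComplex.comp_f, HomologicalComplex.zero_f]
      rcases n with _ | n
      · show (m • 𝟙 (P.complex.X 0)) ≫ P.π.f 0 = 0
        rw [CategoryTheory.Linear.smul_comp, Category.id_comp]
        exact hzero _ (P.π.f 0)
      · show sm.f (n + 1) ≫ P.π.f (n + 1) = 0
        rw [P.π_f_succ, Limits.comp_zero]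
    let H := ProjectiveResolution.liftHomotopyZero sm hcomm
    have hc := H.comm (k + 1)
    rw [dNext_eq H.hom (show (ComplexShape.down ℕ).Rel (k + 1) k by simp),
      prevD_eq H.hom (show (ComplexShape.down ℕ).Rel (k + 2) (k + 1) by simp)] at hc
    refine ⟨(H.hom (k + 1) (k + 2)).hom, (H.hom k (k + 1)).hom, ?_⟩
    have hc' : (m • 𝟙 (P.complex.X (k + 1))) =
        P.complex.d (k + 1) k ≫ H.hom k (k + 1) +
          H.hom (k + 1) (k + 2) ≫ P.complex.d (k + 2) (k + 1) := by
      simpa using hc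
    apply LinearMap.ext
    intro x
    have h1 := congrArg (fun (f : P.complex.X (k + 1) ⟶ P.complex.X (k + 1)) => f.hom x) hc'
    simp only [ModuleCat.hom_add, ModuleCat.hom_smul, ModuleCat.hom_comp, ModuleCat.hom_id,
      LinearMap.add_apply, LinearMap.comp_apply, LinearMap.smul_apply, LinearMap.id_apply] at h1
    show (P.complex.d (k + 2) (k + 1)).hom ((H.hom (k + 1) (k + 2)).hom x) +
        (H.hom k (k + 1)).hom ((P.complex.d (k + 1) k).hom x) = m • x
    exact (add_comm _ _).trans h1.symm
  -- reduce Tor to homology of the tensored complex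
  show Limits.IsZero ((F.leftDerived (k + 1)).obj Y)
  refine Limits.IsZero.of_iso ?_ (P.isoLeftDerivedObj F (k + 1))
  have hEx : ((F.mapHomologicalComplex (ComplexShape.down ℕ)).obj P.complex).ExactAt (k + 1) := by
    rw [HomologicalComplex.exactAt_iff' _ (k + 2) (k + 1) k
      (ChainComplex.prev ℕ (k + 1)) (by simp)]
    rw [ShortComplex.ShortExact.moduleCat_exact_iff_function_exact]
    show Function.Exact
      (LinearMap.lTensor M (P.complex.d (k + 2) (k + 1)).hom)
      (LinearMap.lTensor M (P.complex.d (k + 1) k).hom)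
    exact exact_lTensor_of_generic (P.complex.d (k + 2) (k + 1)).hom (P.complex.d (k + 1) k).hom
      Msub hmono hsup 𝔪 hmax g hgm hsp hmid homot
  exact ((HomologicalComplex.exactAt_iff_isZero_homology _ _).mp hEx)
end chase
end

section
/- Let R be an integral domain that is a finitely generated ℂ-algebra with fraction field F, and let d be an a × b matrix with entries in R whose rank, viewed as a matrix over F, equals r. Then there exists a nonzero element f ∈ R such that for every maximal ideal 𝔪 of R with f ∉ 𝔪, the matrix over the residue field R/𝔪 obtained by reducing the entries of d modulo 𝔪 also has rank r. -/
open Matrix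

/-- If some `r × r` submatrix has nonzero determinant, then the rank is at least `r`. -/
lemma aux_rank_ge {K : Type*} [Field K] {a b r : ℕ}
    (M : Matrix (Fin a) (Fin b) K) (rows : Fin r → Fin a) (cols : Fin r → Fin b)
    (h : (M.submatrix rows cols).det ≠ 0) : r ≤ M.rank := by
  have hunit : IsUnit (M.submatrix rows cols) :=
    (Matrix.isUnit_iff_isUnit_det _).2 (isUnit_iff_ne_zero.2 h)
  have h1 : (M.submatrix rows cols).rank = r := by
    rw [Matrix.rank_of_isUnit _ hunit, Fintype.card_fin]
  have h2 : M.submatrix rows cols =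
      ((1 : Matrix (Fin a) (Fin a) K).submatrix rows (Equiv.refl (Fin a))) * M *
      ((1 : Matrix (Fin b) (Fin b) K).submatrix (Equiv.refl (Fin b)) cols) := by
    rw [Matrix.one_submatrix_mul rows (Equiv.refl (Fin a)) M,
      Matrix.mul_submatrix_one (Equiv.refl (Fin b)) cols]
    simp
  calc r = (M.submatrix rows cols).rank := h1.symm
    _ ≤ M.rank := by
        rw [h2]
        exact le_trans (Matrix.rank_mul_le_left _ _) (Matrix.rank_mul_le_right _ _)

/-- If the rank is at least `r`, one can select `r` linearly independent columns. -/
lemma aux_exists_cols {K : Type*} [Field K] {a b r : ℕ}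
    (M : Matrix (Fin a) (Fin b) K) (h : r ≤ M.rank) :
    ∃ cols : Fin r → Fin b, LinearIndependent K (fun j => Mᵀ (cols j)) := by
  obtain ⟨s, hst, hspan, hli⟩ := exists_linearIndependent K (Set.range Mᵀ)
  have hfin : s.Finite := (Set.finite_range Mᵀ).subset hst
  haveI : Fintype s := hfin.fintype
  have hcard : r ≤ Fintype.card s := by
    have h1 : Module.finrank K (Submodule.span K s) = s.toFinset.card :=
      finrank_span_set_eq_card hli
    have h2 : M.rank = Module.finrank K (Submodule.span K s) := by
      rw [Matrix.rank_eq_finrank_span_cols, hspan]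
      rfl
    rw [← Set.toFinset_card]
    omega
  obtain ⟨g⟩ : Nonempty (Fin r ↪ s) := by
    apply Function.Embedding.nonempty_of_card_le
    simpa using hcard
  have hli' : LinearIndependent K (fun j : Fin r => ((g j : s) : Fin a → K)) :=
    hli.comp g g.injective
  choose cols hcols using fun j : Fin r => hst (g j).2
  refine ⟨cols, ?_⟩
  have : (fun j : Fin r => Mᵀ (cols j)) = fun j : Fin r => ((g j : s) : Fin a → K) := by
    funext j; exact hcols j
  rw [this]; exact hli'

/-- If the rank is at least `r`, there is an `r × r` submatrix with nonzero determinant. -/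
lemma aux_exists_minor {K : Type*} [Field K] {a b r : ℕ}
    (M : Matrix (Fin a) (Fin b) K) (h : r ≤ M.rank) :
    ∃ (rows : Fin r → Fin a) (cols : Fin r → Fin b),
      (M.submatrix rows cols).det ≠ 0 := by
  obtain ⟨cols, hcols⟩ := aux_exists_cols M h
  set N : Matrix (Fin a) (Fin r) K := M.submatrix id cols with hN
  have hNrank : r ≤ Nᵀ.rank := by
    rw [Matrix.rank_transpose, Matrix.rank_eq_finrank_span_cols]
    change r ≤ Module.finrank K (Submodule.span K (Set.range Nᵀ))
    have hrange : Nᵀ = fun j : Fin r => Mᵀ (cols j) := by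
      funext j i; rfl
    rw [hrange, finrank_span_eq_card hcols, Fintype.card_fin]
  obtain ⟨rows, hrows⟩ := aux_exists_cols Nᵀ hNrank
  refine ⟨rows, cols, ?_⟩
  have hli : LinearIndependent K (fun i : Fin r => (M.submatrix rows cols) i) := by
    have : (fun i : Fin r => (M.submatrix rows cols) i)
        = fun i : Fin r => Nᵀᵀ (rows i) := by
      funext i j; rfl
    rw [this]; exact hrows
  have hu : IsUnit (M.submatrix rows cols) :=
    Matrix.linearIndependent_rows_iff_isUnit.1 hli
  exact isUnit_iff_ne_zero.1 ((Matrix.isUnit_iff_isUnit_det _).1 hu)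

/-- **Generic rank specialization.**
Let `R` be an integral domain that is a finitely generated `ℂ`-algebra with fraction
field `F`, and let `d` be an `a × b` matrix over `R` whose rank over `F` is `r`.  Then
there is a nonzero `f ∈ R` such that for every maximal ideal `𝔪` of `R` with `f ∉ 𝔪`,
the reduction of `d` modulo `𝔪` has rank `r` over the residue field `R/𝔪`. -/
theorem generic_rank_specialization
    (R : Type) [CommRing R] [IsDomain R] [Algebra ℂ R] [Algebra.FiniteType ℂ R]
    (a b : ℕ) (d : Matrix (Fin a) (Fin b) R) (r : ℕ)
    (hr : (d.map (algebraMap R (FractionRing R))).rank = r) :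
    ∃ f : R, f ≠ 0 ∧ ∀ 𝔪 : Ideal R, 𝔪.IsMaximal → f ∉ 𝔪 →
      (d.map (Ideal.Quotient.mk 𝔪)).rank = r := by
  set F := FractionRing R
  set φ := algebraMap R F with hφ
  have hφinj : Function.Injective φ := IsFractionRing.injective R F
  obtain ⟨rows, cols, hdet⟩ :=
    aux_exists_minor (d.map φ) (le_of_eq hr.symm)
  set f := (d.submatrix rows cols).det with hf
  have hmapdet : ∀ {r' : ℕ} (S : Type) [CommRing S] (ψ : R →+* S)
      (ro : Fin r' → Fin a) (co : Fin r' → Fin b),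
      ((d.map ψ).submatrix ro co).det = ψ ((d.submatrix ro co).det) := by
    intro r' S _ ψ ro co
    rw [Matrix.submatrix_map]
    exact (RingHom.map_det ψ _).symm
  have hf0 : f ≠ 0 := by
    intro h0
    apply hdet
    rw [hmapdet F φ rows cols, ← hf, h0, map_zero]
  refine ⟨f, hf0, ?_⟩
  intro 𝔪 hmax hfm
  haveI := hmax
  letI : Field (R ⧸ 𝔪) := Ideal.Quotient.field 𝔪
  set π := Ideal.Quotient.mk 𝔪 with hπ
  have hge : r ≤ (d.map π).rank := by
    apply aux_rank_ge (d.map π) rows cols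
    rw [hmapdet (R ⧸ 𝔪) π rows cols]
    intro h0
    exact hfm ((Ideal.Quotient.eq_zero_iff_mem).1 h0)
  have hle : (d.map π).rank ≤ r := by
    by_contra hgt
    push_neg at hgt
    obtain ⟨rows', cols', hdet'⟩ := aux_exists_minor (d.map π) hgt
    have hg : (d.submatrix rows' cols').det ≠ 0 := by
      intro h0
      apply hdet'
      rw [hmapdet (R ⧸ 𝔪) π rows' cols', h0, map_zero]
    have : (r + 1 : ℕ) ≤ (d.map φ).rank := by
      apply aux_rank_ge (d.map φ) rows' cols'
      rw [hmapdet F φ rows' cols']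
      intro h0
      exact hg (hφinj (by rw [h0, map_zero]))
    omega
  omega
end

section
/- Let R be an integral domain with fraction field F, and let P₂ → P₁ → P₀ be R-linear maps d₂ : P₂ → P₁ and d₁ : P₁ → P₀ between finite free R-modules with d₁ ∘ d₂ = 0, such that the induced sequence P₂ ⊗_R F → P₁ ⊗_R F → P₀ ⊗_R F is exact at P₁ ⊗_R F; let r₁ and r₂ denote the ranks of d₁ ⊗ 1_F and d₂ ⊗ 1_F. If 𝔪 is a maximal ideal of R with residue field κ = R/𝔪 such that d₁ ⊗ 1_κ has rank r₁ and d₂ ⊗ 1_κ has rank r₂, then the sequence P₂ ⊗_R κ → P₁ ⊗_R κ → P₀ ⊗_R κ is exact at P₁ ⊗_R κ. -/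
/-- **Exactness specialization.**
Let `R` be an integral domain with fraction field `F`, and let
`d₂ : P₂ → P₁`, `d₁ : P₁ → P₀` be `R`-linear maps between finite free `R`-modules with
`d₁ ∘ d₂ = 0`, such that the base-changed sequence over `F` is exact at the middle term;
let `r₁`, `r₂` be the ranks of `d₁ ⊗ 1_F` and `d₂ ⊗ 1_F`.  If `𝔪` is a maximal ideal of
`R` with residue field `κ = R/𝔪` such that `d₁ ⊗ 1_κ` has rank `r₁` and `d₂ ⊗ 1_κ` has
rank `r₂`, then the base-changed sequence over `κ` is exact at the middle term. -/
theorem exactness_specialization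
    (R : Type) [CommRing R] [IsDomain R]
    (P₀ P₁ P₂ : Type) [AddCommGroup P₀] [AddCommGroup P₁] [AddCommGroup P₂]
    [Module R P₀] [Module R P₁] [Module R P₂]
    [Module.Free R P₀] [Module.Free R P₁] [Module.Free R P₂]
    [Module.Finite R P₀] [Module.Finite R P₁] [Module.Finite R P₂]
    (d₁ : P₁ →ₗ[R] P₀) (d₂ : P₂ →ₗ[R] P₁) (hdd : d₁.comp d₂ = 0)
    (hexact : LinearMap.range (d₂.baseChange (FractionRing R)) =
      LinearMap.ker (d₁.baseChange (FractionRing R)))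
    (r₁ r₂ : ℕ)
    (hr₁ : Module.finrank (FractionRing R)
      (LinearMap.range (d₁.baseChange (FractionRing R))) = r₁)
    (hr₂ : Module.finrank (FractionRing R)
      (LinearMap.range (d₂.baseChange (FractionRing R))) = r₂)
    (𝔪 : Ideal R) (h𝔪 : 𝔪.IsMaximal)
    (hκ₁ : Module.finrank (R ⧸ 𝔪) (LinearMap.range (d₁.baseChange (R ⧸ 𝔪))) = r₁)
    (hκ₂ : Module.finrank (R ⧸ 𝔪) (LinearMap.range (d₂.baseChange (R ⧸ 𝔪))) = r₂) :
    LinearMap.range (d₂.baseChange (R ⧸ 𝔪)) = LinearMap.ker (d₁.baseChange (R ⧸ 𝔪)) := by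
  letI : Field (R ⧸ 𝔪) := Ideal.Quotient.field 𝔪
  have hle : LinearMap.range (d₂.baseChange (R ⧸ 𝔪)) ≤
      LinearMap.ker (d₁.baseChange (R ⧸ 𝔪)) := by
    rintro x ⟨y, rfl⟩
    have h0 : (d₁.baseChange (R ⧸ 𝔪)).comp (d₂.baseChange (R ⧸ 𝔪)) = 0 := by
      rw [← LinearMap.baseChange_comp, hdd, LinearMap.baseChange_zero]
    simpa using LinearMap.congr_fun h0 y
  have hrnF := LinearMap.finrank_range_add_finrank_ker (d₁.baseChange (FractionRing R))
  rw [hr₁, ← hexact, hr₂] at hrnF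
  have hrnκ := LinearMap.finrank_range_add_finrank_ker (d₁.baseChange (R ⧸ 𝔪))
  rw [hκ₁] at hrnκ
  have htot : Module.finrank (FractionRing R) (TensorProduct R (FractionRing R) P₁) =
      Module.finrank (R ⧸ 𝔪) (TensorProduct R (R ⧸ 𝔪) P₁) := by
    rw [Module.finrank_baseChange, Module.finrank_baseChange]
  have hker : Module.finrank (R ⧸ 𝔪) (LinearMap.ker (d₁.baseChange (R ⧸ 𝔪))) = r₂ := by
    omega
  exact Submodule.eq_of_le_of_finrank_eq hle (by rw [hκ₂, hker])
end
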